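/- The 1-D FID-estimator ordering reversal: let P₁ = N(0, (1 − 1/m)²), P₂ = Q = N(0,1). Then FID(P₁,Q) = 1/m² > 0 = FID(P₂,Q), but for m ≥ 2 the expected plug-in estimates satisfy E_{X∼P₁^m}[FID(P̂_X, Q)] < E_{Y∼P₂^m}[FID(P̂_Y, Q)], since the difference equals (1/m)(1/m² − 1/m + 2(d_m − 1)) < 0, using d_m < 1 and 1/m² < 1/m for m ≥ 2. -/

import Mathlib

open MeasureTheory ProbabilityTheory

/-- The sample mean of `m` observations. -/
noncomputable def sampleMean {m : ℕ} (x : Fin m → ℝ) : ℝ := (∑ i, x i) / m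

/-- The unbiased sample variance of `m` observations. -/
noncomputable def sampleVar {m : ℕ} (x : Fin m → ℝ) : ℝ :=
  (∑ i, (x i - sampleMean x) ^ 2) / ((m : ℝ) - 1)

/-- The plug-in FID estimate against the known target `Q = N(0,1)`:
`μ̂² + σ̂² + 1 - 2σ̂`. -/
noncomputable def fidEst {m : ℕ} (x : Fin m → ℝ) : ℝ :=
  (sampleMean x) ^ 2 + sampleVar x + 1 - 2 * Real.sqrt (sampleVar x)

/-- The 1-D FID between Gaussians `N(μ₁,σ₁²)` and `N(μ₂,σ₂²)`. -/
noncomputable def fid1D (μ₁ σ₁ μ₂ σ₂ : ℝ) : ℝ := (μ₁ - μ₂) ^ 2 + (σ₁ - σ₂) ^ 2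

section FIDAux

open Real Filter

noncomputable def g0 (x : ℝ) : ℝ := Real.exp (-x^2/2)

lemma g0_int : Integrable g0 := by
  have h := integrable_exp_neg_mul_sq (b := (1/2 : ℝ)) (by norm_num)
  refine h.congr ?_
  filter_upwards with x
  simp only [g0]; ring_nf

lemma g1_int : Integrable (fun x : ℝ => x * g0 x) := by
  have h := integrable_mul_exp_neg_mul_sq (b := (1/2 : ℝ)) (by norm_num)
  refine h.congr ?_
  filter_upwards with x
  simp only [g0]; ring_nf

lemma g2_int : Integrable (fun x : ℝ => x^2 * g0 x) := by
  have h := integrable_rpow_mul_exp_neg_mul_sq (b := (1/2 : ℝ)) (by norm_num) (s := 2) (by norm_num)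
  refine h.congr ?_
  filter_upwards with x
  rw [show ((2:ℝ)) = ((2:ℕ):ℝ) by norm_num, Real.rpow_natCast]
  simp only [g0]; ring_nf

lemma J0 : ∫ x : ℝ, g0 x = Real.sqrt (2 * π) := by
  have h := integral_gaussian (1/2 : ℝ)
  rw [show π / (1/2 : ℝ) = 2 * π by ring] at h
  rw [← h]
  congr 1 with x
  simp only [g0]; ring_nf

lemma g0_deriv (x : ℝ) : HasDerivAt g0 (-x * g0 x) x := by
  have h1 : HasDerivAt (fun x : ℝ => -x^2/2) (-x) x := by
    have := ((hasDerivAt_pow 2 x).neg.div_const 2)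
    refine this.congr_deriv ?_
    rw [show (2:ℕ) - 1 = 1 from rfl]; push_cast; ring
  have := h1.exp
  refine this.congr_deriv ?_
  simp only [g0]; ring

lemma sq_half_tendsto_top : Tendsto (fun x : ℝ => x^2/2) atTop atTop :=
  (tendsto_pow_atTop (by norm_num)).atTop_div_const (by norm_num)

lemma sq_half_tendsto_bot : Tendsto (fun x : ℝ => x^2/2) atBot atTop := by
  have := sq_half_tendsto_top.comp tendsto_neg_atBot_atTop
  exact this.congr (by intro x; simp [Function.comp, neg_pow])

lemma g0_tendsto_top : Tendsto g0 atTop (nhds 0) := by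
  have := Real.tendsto_exp_neg_atTop_nhds_zero.comp sq_half_tendsto_top
  exact this.congr (by intro x; simp [Function.comp, g0]; ring_nf)

lemma g0_tendsto_bot : Tendsto g0 atBot (nhds 0) := by
  have := Real.tendsto_exp_neg_atTop_nhds_zero.comp sq_half_tendsto_bot
  exact this.congr (by intro x; simp [Function.comp, g0]; ring_nf)

lemma xg0_tendsto_top : Tendsto (fun x : ℝ => x * g0 x) atTop (nhds 0) := by
  have h := (rpow_mul_exp_neg_mul_sq_isLittleO_exp_neg (b := (1/2:ℝ)) (by norm_num) 1)
  have h2 : Tendsto (fun x : ℝ => Real.exp (-(1/2) * x)) atTop (nhds 0) := by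
    have : Tendsto (fun x : ℝ => -(1/2) * x) atTop atBot := by
      exact tendsto_id.const_mul_atTop_of_neg (by norm_num)
    exact Real.tendsto_exp_atBot.comp this
  have h3 := h.tendsto_zero_of_tendsto h2
  apply h3.congr'
  filter_upwards [eventually_ge_atTop (0:ℝ)] with x hx
  rw [Real.rpow_one]
  simp only [g0]; ring_nf

lemma xg0_tendsto_bot : Tendsto (fun x : ℝ => x * g0 x) atBot (nhds 0) := by
  have h : Tendsto (fun x : ℝ => -((-x) * g0 (-x))) atBot (nhds 0) := by
    have := (xg0_tendsto_top.comp tendsto_neg_atBot_atTop).neg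
    simpa using this
  apply h.congr
  intro x
  simp only [g0, neg_neg]
  ring_nf

lemma J1 : ∫ x : ℝ, x * g0 x = 0 := by
  have hderiv : ∀ x : ℝ, HasDerivAt (fun y => -g0 y) (x * g0 x) x := by
    intro x
    have := (g0_deriv x).neg
    exact this.congr_deriv (by ring)
  have htop : Tendsto (fun y => -g0 y) atTop (nhds 0) := by
    simpa using g0_tendsto_top.neg
  have hbot : Tendsto (fun y => -g0 y) atBot (nhds 0) := by
    simpa using g0_tendsto_bot.neg
  have hIoi := integral_Ioi_of_hasDerivAt_of_tendsto' (a := 0)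
    (fun x _ => hderiv x) g1_int.integrableOn htop
  have hIic := integral_Iic_of_hasDerivAt_of_tendsto' (a := 0)
    (fun x _ => hderiv x) g1_int.integrableOn hbot
  rw [← intervalIntegral.integral_Iic_add_Ioi (b := (0:ℝ)) g1_int.integrableOn g1_int.integrableOn,
    hIoi, hIic]
  ring

lemma J2 : ∫ x : ℝ, x^2 * g0 x = Real.sqrt (2 * π) := by
  have hderiv : ∀ x : ℝ, HasDerivAt (fun y => -y * g0 y) (x^2 * g0 x - g0 x) x := by
    intro x
    have h1 : HasDerivAt (fun y : ℝ => -y) (-1) x := (hasDerivAt_id x).neg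
    have := h1.mul (g0_deriv x)
    exact this.congr_deriv (by ring)
  have htop : Tendsto (fun y : ℝ => -y * g0 y) atTop (nhds 0) := by
    have := xg0_tendsto_top.neg
    simp only [neg_zero] at this
    exact this.congr (fun x => by ring)
  have hbot : Tendsto (fun y : ℝ => -y * g0 y) atBot (nhds 0) := by
    have := xg0_tendsto_bot.neg
    simp only [neg_zero] at this
    exact this.congr (fun x => by ring)
  have hint : Integrable (fun x : ℝ => x^2 * g0 x - g0 x) := g2_int.sub g0_int
  have hIoi := integral_Ioi_of_hasDerivAt_of_tendsto' (a := 0)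
    (fun x _ => hderiv x) hint.integrableOn htop
  have hIic := integral_Iic_of_hasDerivAt_of_tendsto' (a := 0)
    (fun x _ => hderiv x) hint.integrableOn hbot
  have htot : ∫ x : ℝ, (x^2 * g0 x - g0 x) = 0 := by
    rw [← intervalIntegral.integral_Iic_add_Ioi (b := (0:ℝ)) hint.integrableOn hint.integrableOn, hIoi, hIic]
    ring
  rw [integral_sub g2_int g0_int] at htot
  linarith [J0]

lemma pdf_eq (x : ℝ) : gaussianPDFReal 0 1 x = (Real.sqrt (2*π))⁻¹ * g0 x := by
  simp [gaussianPDFReal, g0]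

lemma gauss_eq_wd : gaussianReal 0 1 =
    volume.withDensity (fun x => ((gaussianPDFReal 0 1 x).toNNReal : ENNReal)) := by
  rw [gaussianReal_of_var_ne_zero _ one_ne_zero]
  rfl

lemma integral_gauss (g : ℝ → ℝ) :
    ∫ x, g x ∂(gaussianReal 0 1) = ∫ x, gaussianPDFReal 0 1 x * g x := by
  rw [gauss_eq_wd, integral_withDensity_eq_integral_smul
    (measurable_gaussianPDFReal 0 1).real_toNNReal g]
  congr 1 with x
  simp [NNReal.smul_def, Real.coe_toNNReal _ (gaussianPDFReal_nonneg 0 1 x)]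

lemma integrable_gauss_iff (g : ℝ → ℝ) :
    Integrable g (gaussianReal 0 1) ↔ Integrable (fun x => gaussianPDFReal 0 1 x * g x) := by
  rw [gauss_eq_wd, integrable_withDensity_iff_integrable_smul
    (measurable_gaussianPDFReal 0 1).real_toNNReal]
  constructor <;> intro h <;> refine h.congr ?_ <;> filter_upwards with x <;>
    simp [NNReal.smul_def, Real.coe_toNNReal _ (gaussianPDFReal_nonneg 0 1 x)]

lemma sqrt_two_pi_pos : (0:ℝ) < Real.sqrt (2*π) :=
  Real.sqrt_pos.mpr (by positivity)

lemma gauss_m1 : ∫ x, x ∂(gaussianReal 0 1) = 0 := by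
  rw [integral_gauss]
  have : ∀ x : ℝ, gaussianPDFReal 0 1 x * x = (Real.sqrt (2*π))⁻¹ * (x * g0 x) := by
    intro x; rw [pdf_eq]; ring
  simp_rw [this, integral_const_mul, J1, mul_zero]

lemma gauss_m2 : ∫ x, x * x ∂(gaussianReal 0 1) = 1 := by
  rw [integral_gauss]
  have : ∀ x : ℝ, gaussianPDFReal 0 1 x * (x * x) = (Real.sqrt (2*π))⁻¹ * (x^2 * g0 x) := by
    intro x; rw [pdf_eq]; ring
  simp_rw [this, integral_const_mul, J2]
  field_simp

lemma gauss_int1 : Integrable (fun x : ℝ => x) (gaussianReal 0 1) := by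
  rw [integrable_gauss_iff]
  have : ∀ x : ℝ, gaussianPDFReal 0 1 x * x = (Real.sqrt (2*π))⁻¹ * (x * g0 x) := by
    intro x; rw [pdf_eq]; ring
  simp_rw [this]
  exact g1_int.const_mul _

lemma gauss_int2 : Integrable (fun x : ℝ => x * x) (gaussianReal 0 1) := by
  rw [integrable_gauss_iff]
  have : ∀ x : ℝ, gaussianPDFReal 0 1 x * (x * x) = (Real.sqrt (2*π))⁻¹ * (x^2 * g0 x) := by
    intro x; rw [pdf_eq]; ring
  simp_rw [this]
  exact g2_int.const_mul _

lemma pi_int_eq {m : ℕ} (f : Fin m → ℝ → ℝ) :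
    ∫ x : Fin m → ℝ, ∏ i, f i (x i) ∂(Measure.pi fun _ => gaussianReal 0 1)
      = ∏ i, ∫ y, f i y ∂(gaussianReal 0 1) := by
  letI : MeasureSpace ℝ := ⟨gaussianReal 0 1⟩
  haveI : SigmaFinite (volume : Measure ℝ) :=
    inferInstanceAs (SigmaFinite (gaussianReal 0 1))
  exact MeasureTheory.integral_fintype_prod_eq_prod f

lemma pi_integrable {m : ℕ} (f : Fin m → ℝ → ℝ)
    (hf : ∀ i, Integrable (f i) (gaussianReal 0 1)) :
    Integrable (fun x : Fin m → ℝ => ∏ i, f i (x i))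
      (Measure.pi fun _ => gaussianReal 0 1) := by
  letI : MeasureSpace ℝ := ⟨gaussianReal 0 1⟩
  haveI : SigmaFinite (volume : Measure ℝ) :=
    inferInstanceAs (SigmaFinite (gaussianReal 0 1))
  exact MeasureTheory.Integrable.fintype_prod_dep hf

lemma coord_prod_eq {m : ℕ} (i j : Fin m) (x : Fin m → ℝ) :
    x i * x j = ∏ k, ((if k = i then x k else 1) * (if k = j then x k else 1)) := by
  rw [Finset.prod_mul_distrib, Finset.prod_ite_eq' Finset.univ i x,
    Finset.prod_ite_eq' Finset.univ j x]
  simp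

lemma int_coord_mul {m : ℕ} (i j : Fin m) :
    ∫ x : Fin m → ℝ, x i * x j ∂(Measure.pi fun _ => gaussianReal 0 1)
      = if i = j then 1 else 0 := by
  have h := pi_int_eq (m := m)
    (fun k y => (if k = i then y else 1) * (if k = j then y else 1))
  simp_rw [← coord_prod_eq] at h
  rw [h]
  by_cases hij : i = j
  · subst hij
    rw [if_pos rfl, Finset.prod_eq_one]
    intro k _
    by_cases hk : k = i <;> simp [hk, gauss_m2]
  · rw [if_neg hij, Finset.prod_eq_zero (Finset.mem_univ i)]
    simp only [if_pos rfl, if_neg hij]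
    simpa using gauss_m1

lemma integrable_coord_mul {m : ℕ} (i j : Fin m) :
    Integrable (fun x : Fin m → ℝ => x i * x j)
      (Measure.pi fun _ => gaussianReal 0 1) := by
  have h := pi_integrable (m := m)
    (fun k y => (if k = i then y else 1) * (if k = j then y else 1)) ?_
  · exact h.congr (Filter.Eventually.of_forall fun x => (coord_prod_eq i j x).symm)
  intro k
  by_cases hk : k = i <;> by_cases hk' : k = j <;>
    simp only [hk, hk', if_pos, if_neg, if_true, if_false, ite_true, ite_false] <;>
    simp_all [gauss_int1, gauss_int2, mul_one, one_mul]

lemma sampleVar_nonneg {m : ℕ} (hm : 2 ≤ m) (x : Fin m → ℝ) : 0 ≤ sampleVar x := by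
  apply div_nonneg (Finset.sum_nonneg fun i _ => sq_nonneg _)
  have : (2:ℝ) ≤ (m:ℝ) := by exact_mod_cast hm
  linarith

lemma sampleMean_smul {m : ℕ} (c : ℝ) (x : Fin m → ℝ) :
    sampleMean (fun i => c * x i) = c * sampleMean x := by
  simp [sampleMean, ← Finset.mul_sum, mul_div_assoc]

lemma sampleVar_smul {m : ℕ} (c : ℝ) (x : Fin m → ℝ) :
    sampleVar (fun i => c * x i) = c^2 * sampleVar x := by
  simp only [sampleVar, sampleMean_smul]
  rw [show (∑ i, (c * x i - c * sampleMean x)^2) = c^2 * ∑ i, (x i - sampleMean x)^2 by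
    rw [Finset.mul_sum]; apply Finset.sum_congr rfl; intro i _; ring]
  rw [mul_div_assoc]

lemma sampleMean_sq_eq {m : ℕ} (x : Fin m → ℝ) :
    sampleMean x ^ 2 = (∑ i, ∑ j, x i * x j) / (m:ℝ)^2 := by
  rw [sampleMean, div_pow, sq, Finset.sum_mul_sum]

lemma sampleVar_eq {m : ℕ} (hm : (m:ℝ) ≠ 0) (x : Fin m → ℝ) :
    sampleVar x = ((∑ i, x i * x i) - (∑ i, ∑ j, x i * x j) / (m:ℝ)) / ((m : ℝ) - 1) := by
  rw [sampleVar]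
  congr 1
  have hs : ∑ i, ∑ j, x i * x j = (∑ i, x i) * (∑ j, x j) := (Finset.sum_mul_sum _ _ _ _).symm
  rw [hs]
  set s := ∑ i, x i with hsdef
  have hmean : sampleMean x = s / m := rfl
  calc ∑ i, (x i - sampleMean x)^2
      = ∑ i, (x i * x i - (2*s/m) * x i + (s/m)^2) := by
        apply Finset.sum_congr rfl
        intro i _
        rw [hmean]
        ring
    _ = (∑ i, x i * x i) - (2*s/m) * s + m * (s/m)^2 := by
        rw [Finset.sum_add_distrib, Finset.sum_sub_distrib, ← Finset.mul_sum,
          Finset.sum_const, Finset.card_univ, Fintype.card_fin, nsmul_eq_mul]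
    _ = (∑ i, x i * x i) - s * s / m := by
        field_simp
        ring

lemma fidEst_smul {m : ℕ} {c : ℝ} (hc : 0 ≤ c) (hm : 2 ≤ m) (y : Fin m → ℝ) :
    fidEst (fun i => c * y i)
      = (c^2 * sampleMean y ^ 2 + c^2 * sampleVar y + 1)
        - (2 * c) * Real.sqrt (sampleVar y) := by
  rw [fidEst, sampleMean_smul, sampleVar_smul,
    Real.sqrt_mul (sq_nonneg c), Real.sqrt_sq hc]
  ring

end FIDAux

/-- The 1-D FID-estimator ordering reversal: `FID(P₁,Q) = 1/m² > 0 = FID(P₂,Q)`, but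
the expected plug-in estimate from `P₁ = N(0,(1-1/m)²)` is strictly smaller than that from
`P₂ = Q = N(0,1)`. -/
theorem fid_estimator_ordering_reversal (m : ℕ) (hm : 2 ≤ m) :
    fid1D 0 (1 - 1 / (m : ℝ)) 0 1 = 1 / (m : ℝ) ^ 2
      ∧ fid1D 0 1 0 1 = 0
      ∧ (0 : ℝ) < 1 / (m : ℝ) ^ 2
      ∧ (∫ x : Fin m → ℝ, fidEst x
            ∂(Measure.pi fun _ : Fin m => gaussianReal 0 ((1 - 1 / (m : ℝ)) ^ 2).toNNReal))
        < ∫ x : Fin m → ℝ, fidEst x ∂(Measure.pi fun _ : Fin m => gaussianReal 0 1) := by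
  have hn2 : (2:ℝ) ≤ (m:ℝ) := by exact_mod_cast hm
  have hn0 : (m:ℝ) ≠ 0 := by positivity
  have hnpos : (0:ℝ) < (m:ℝ) := by positivity
  refine ⟨?_, ?_, ?_, ?_⟩
  · simp only [fid1D]
    field_simp
    ring
  · simp [fid1D]
  · positivity
  set n : ℝ := (m:ℝ) with hn
  set σ : ℝ := 1 - 1/n with hσ
  have hσ0 : 0 ≤ σ := by
    rw [hσ]
    have : 1/n ≤ 1/2 := by
      apply div_le_div_of_nonneg_left (by norm_num) (by norm_num) hn2
    linarith
  have hσlt : σ < 1 := by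
    rw [hσ]
    have : 0 < 1/n := by positivity
    linarith
  set PP : Measure (Fin m → ℝ) := Measure.pi fun _ : Fin m => gaussianReal 0 1 with hPPdef
  haveI : IsProbabilityMeasure PP := by rw [hPPdef]; infer_instance
  -- continuity of pieces
  have hconts : Continuous (fun x : Fin m → ℝ => sampleVar x) := by
    unfold sampleVar sampleMean
    fun_prop
  have hcontm : Continuous (fun x : Fin m → ℝ => sampleMean x) := by
    unfold sampleMean
    fun_prop
  have hcontf : Continuous (fun x : Fin m → ℝ => fidEst x) := by
    unfold fidEst
    fun_prop
  -- integrability and integrals of polynomial parts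
  have hS2_int : Integrable (fun x : Fin m → ℝ => ∑ i, x i * x i) PP :=
    integrable_finset_sum _ fun i _ => integrable_coord_mul i i
  have hS2 : ∫ x : Fin m → ℝ, ∑ i, x i * x i ∂PP = n := by
    simp only [hPPdef]
    rw [integral_finset_sum _ fun i _ => integrable_coord_mul i i]
    simp [int_coord_mul, hn]
  have hQ_int : Integrable (fun x : Fin m → ℝ => ∑ i, ∑ j, x i * x j) PP :=
    integrable_finset_sum _ fun i _ =>
      integrable_finset_sum _ fun j _ => integrable_coord_mul i j
  have hQ : ∫ x : Fin m → ℝ, ∑ i, ∑ j, x i * x j ∂PP = n := by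
    simp only [hPPdef]
    rw [integral_finset_sum _ fun i _ =>
      integrable_finset_sum _ fun j _ => integrable_coord_mul i j]
    have h1 : ∀ i : Fin m, ∑ j, (∫ x : Fin m → ℝ, x i * x j
        ∂(Measure.pi fun _ : Fin m => gaussianReal 0 1)) = 1 := by
      intro i
      simp_rw [int_coord_mul]
      rw [Finset.sum_ite_eq]
      simp
    simp_rw [integral_finset_sum _ fun j _ => integrable_coord_mul _ j, h1]
    simp [hn]
  have hM2_int : Integrable (fun x : Fin m → ℝ => sampleMean x ^ 2) PP :=
    (hQ_int.div_const (n^2)).congr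
      (Filter.Eventually.of_forall fun x => (sampleMean_sq_eq x).symm)
  have hM2 : ∫ x : Fin m → ℝ, sampleMean x ^ 2 ∂PP = 1/n := by
    rw [integral_congr_ae (Filter.Eventually.of_forall fun x => sampleMean_sq_eq x),
      integral_div, hQ]
    rw [sq]
    field_simp
    rfl
  have hV_int : Integrable (fun x : Fin m → ℝ => sampleVar x) PP :=
    ((hS2_int.sub (hQ_int.div_const n)).div_const (n-1)).congr
      (Filter.Eventually.of_forall fun x => (sampleVar_eq hn0 x).symm)
  have hV : ∫ x : Fin m → ℝ, sampleVar x ∂PP = 1 := by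
    rw [integral_congr_ae (Filter.Eventually.of_forall fun x => sampleVar_eq hn0 x),
      integral_div, integral_sub hS2_int (hQ_int.div_const n), integral_div, hS2, hQ]
    rw [div_eq_one_iff_eq (by linarith)]
    field_simp
    rfl
  -- sqrt part
  have hbound_int : Integrable (fun x : Fin m → ℝ => (1 + sampleVar x) / 2) PP := by
    exact ((integrable_const (1:ℝ)).add hV_int).div_const 2
  have hptwise : ∀ x : Fin m → ℝ, Real.sqrt (sampleVar x) ≤ (1 + sampleVar x) / 2 := by
    intro x
    nlinarith [Real.sq_sqrt (sampleVar_nonneg hm x), Real.sqrt_nonneg (sampleVar x),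
      sq_nonneg (1 - Real.sqrt (sampleVar x))]
  have hsqrt_int : Integrable (fun x : Fin m → ℝ => Real.sqrt (sampleVar x)) PP := by
    refine Integrable.mono' hbound_int
      (hconts.sqrt.aestronglyMeasurable) (Filter.Eventually.of_forall fun x => ?_)
    rw [Real.norm_of_nonneg (Real.sqrt_nonneg _)]
    exact hptwise x
  set B : ℝ := ∫ x : Fin m → ℝ, Real.sqrt (sampleVar x) ∂PP with hB
  have hB0 : 0 ≤ B := integral_nonneg fun x => Real.sqrt_nonneg _
  have hB1 : B ≤ 1 := by
    have hle := integral_mono hsqrt_int hbound_int hptwise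
    rw [integral_div, integral_add (integrable_const (1:ℝ)) hV_int, integral_const, hV] at hle
    simpa using hle
  -- value of RHS integral
  have hE2 : ∫ x : Fin m → ℝ, fidEst x ∂PP = 1/n + 1 + 1 - 2 * B := by
    have : (fun x : Fin m → ℝ => fidEst x)
        = fun x => (sampleMean x ^ 2 + sampleVar x + 1) - 2 * Real.sqrt (sampleVar x) := rfl
    have hpoly_int : Integrable (fun x : Fin m → ℝ =>
        sampleMean x ^ 2 + sampleVar x + 1) PP := by
      exact (hM2_int.add hV_int).add (integrable_const 1)
    have hmv_int : Integrable (fun x : Fin m → ℝ =>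
        sampleMean x ^ 2 + sampleVar x) PP := by
      exact hM2_int.add hV_int
    rw [this, integral_sub hpoly_int (hsqrt_int.const_mul 2),
      integral_add hmv_int (integrable_const 1),
      integral_add hM2_int hV_int, integral_const, integral_const_mul, hM2, hV]
    simp [hB]
  -- change of variables for LHS
  have hmapμ : gaussianReal 0 (((1 - 1/n)^2).toNNReal)
      = Measure.map (fun y => σ * y) (gaussianReal 0 1) := by
    rw [gaussianReal_map_const_mul σ, mul_zero, mul_one]
    congr 1
    rw [← hσ, Real.toNNReal_of_nonneg (sq_nonneg σ)]
  have hT_meas : Measurable (fun (y : Fin m → ℝ) (i : Fin m) => σ * y i) :=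
    measurable_pi_lambda _ fun i => measurable_const.mul (measurable_pi_apply i)
  have hmapPP : (Measure.pi fun _ : Fin m => gaussianReal 0 ((1 - 1 / (m : ℝ)) ^ 2).toNNReal)
      = Measure.map (fun (y : Fin m → ℝ) (i : Fin m) => σ * y i) PP := by
    rw [hPPdef]
    have hmp : ∀ _i : Fin m, MeasurePreserving (fun y : ℝ => σ * y) (gaussianReal 0 1)
        (gaussianReal 0 (((1 - 1/n)^2).toNNReal)) :=
      fun _ => ⟨measurable_id.const_mul σ, hmapμ.symm⟩
    exact (measurePreserving_pi _ _ hmp).map_eq.symm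
  have hE1 : (∫ x : Fin m → ℝ, fidEst x
      ∂(Measure.pi fun _ : Fin m => gaussianReal 0 ((1 - 1 / (m : ℝ)) ^ 2).toNNReal))
      = σ^2 * (1/n) + σ^2 * 1 + 1 - 2 * σ * B := by
    rw [hmapPP, integral_map hT_meas.aemeasurable hcontf.aestronglyMeasurable]
    rw [integral_congr_ae (Filter.Eventually.of_forall fun y => fidEst_smul hσ0 hm y)]
    have hpoly_int : Integrable (fun x : Fin m → ℝ =>
        σ^2 * sampleMean x ^ 2 + σ^2 * sampleVar x + 1) PP := by
      exact ((hM2_int.const_mul _).add (hV_int.const_mul _)).add (integrable_const 1)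
    have hmv_int : Integrable (fun x : Fin m → ℝ =>
        σ^2 * sampleMean x ^ 2 + σ^2 * sampleVar x) PP := by
      exact (hM2_int.const_mul _).add (hV_int.const_mul _)
    rw [integral_sub hpoly_int (hsqrt_int.const_mul _),
      integral_add hmv_int (integrable_const 1),
      integral_add (hM2_int.const_mul _) (hV_int.const_mul _),
      integral_const, integral_const_mul, integral_const_mul, integral_const_mul, hM2, hV]
    simp [hB]
  rw [hE1, hE2]
  -- final arithmetic
  have hu0 : 0 < 1/n := by positivity
  have hu1 : 1/n ≤ 1/2 := by
    apply div_le_div_of_nonneg_left (by norm_num) (by norm_num) hn2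
  have hσval : σ = 1 - 1/n := hσ
  nlinarith [mul_pos hu0 hu0, sq_nonneg (1/n), mul_nonneg hB0 hu0.le]
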